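/- For every integer c ≥ 2 there exist a constant C > 0 and a family (A_n)_{n ≥ 1} of verifiers with certificate length s(n) ≤ C·⌈log₂(n+2)⌉ that is a proof-labeling scheme for the class of path-outerplanar graphs. -/

import Mathlib

set_option maxHeartbeats 1600000


open Classical in
/-- The family of verifiers `A` with certificate length `s` is a proof-labeling scheme
for the class `C` of graphs (identifiers are taken in `Fin (n ^ c)`). -/
def IsPLS (c : ℕ) (s : ℕ → ℕ)
    (A : (n : ℕ) → ℕ → (Fin (s n) → Bool) → Multiset (Fin (s n) → Bool) → Bool)
    (C : (n : ℕ) → SimpleGraph (Fin n) → Prop) : Prop :=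
  ∀ n : ℕ, 1 ≤ n → ∀ G : SimpleGraph (Fin n), G.Connected →
    ∀ ids : Fin n → Fin (n ^ c), Function.Injective ids →
      (C n G ↔ ∃ cert : Fin n → (Fin (s n) → Bool),
        ∀ v : Fin n,
          A n (ids v) (cert v)
            (((Finset.univ.filter (fun u => G.Adj v u)).val).map cert) = true)

/-- `G` on `Fin N` is path-outerplanar with witness the natural order: consecutive
vertices are adjacent, and any two edges are nested or non-overlapping. -/
def IsPathOuterplanarWitness {N : ℕ} (G : SimpleGraph (Fin N)) : Prop :=
  (∀ i : Fin N, ∀ h : (i : ℕ) + 1 < N, G.Adj i ⟨(i : ℕ) + 1, h⟩) ∧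
  (∀ a b c d : Fin N, G.Adj a b → G.Adj c d → a < b → c < d →
    (b ≤ c) ∨ (d ≤ a) ∨ (a ≤ c ∧ d ≤ b) ∨ (c ≤ a ∧ b ≤ d))

/-- `G` is path-outerplanar: some linear ordering of the vertices is a witness. -/
def IsPathOuterplanar {N : ℕ} (G : SimpleGraph (Fin N)) : Prop :=
  ∃ e : Fin N ≃ Fin N, IsPathOuterplanarWitness (G.comap e)


namespace PLSProof

open Finset

noncomputable section
open Classical

/-- certificate length -/
abbrev sz (n : ℕ) : ℕ := 4 * Nat.clog 2 (n + 2)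

/-- data stored in a certificate : (position, enclosure count, start-degree) -/
abbrev Dat (n : ℕ) := Fin (n + 2) × Fin ((n + 2) ^ 2) × Fin (n + 2)

lemma card_dat_le (n : ℕ) :
    Fintype.card (Dat n) ≤ Fintype.card (Fin (sz n) → Bool) := by
  have h2 : n + 2 ≤ 2 ^ Nat.clog 2 (n + 2) := Nat.le_pow_clog (by norm_num) _
  have : Fintype.card (Dat n) = (n + 2) ^ 4 := by
    simp [Fintype.card_prod, Fintype.card_fin]
    ring
  rw [this, Fintype.card_fun, Fintype.card_bool, Fintype.card_fin]
  calc (n + 2) ^ 4 ≤ (2 ^ Nat.clog 2 (n + 2)) ^ 4 := Nat.pow_le_pow_left h2 4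
    _ = 2 ^ sz n := by rw [← pow_mul, Nat.mul_comm]

/-- encoding of the data as a bit string -/
def emb (n : ℕ) : Dat n ↪ (Fin (sz n) → Bool) :=
  Classical.choice (Function.Embedding.nonempty_of_card_le (card_dat_le n))

/-- decoding -/
def dec (n : ℕ) (g : Fin (sz n) → Bool) : Dat n :=
  if h : ∃ d, emb n d = g then h.choose
  else (⟨0, by omega⟩, ⟨0, by positivity⟩, ⟨0, by omega⟩)

lemma dec_emb (n : ℕ) (d : Dat n) : dec n (emb n d) = d := by
  have h : ∃ x, emb n x = emb n d := ⟨d, rfl⟩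
  rw [dec, dif_pos h]
  exact (emb n).injective h.choose_spec

def pOf (n : ℕ) (x : Dat n) : ℕ := (x.1 : ℕ)
def kOf (n : ℕ) (x : Dat n) : ℕ := (x.2.1 : ℕ)
def dOf (n : ℕ) (x : Dat n) : ℕ := (x.2.2 : ℕ)

/-- the verifier's acceptance condition -/
def VerCond (n : ℕ) (f : Fin (sz n) → Bool) (M : Multiset (Fin (sz n) → Bool)) : Prop :=
  let P : Multiset (Dat n) := M.map (dec n)
  let Pos : Multiset ℕ := P.map (pOf n)
  let p : ℕ := pOf n (dec n f)
  let k : ℕ := kOf n (dec n f)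
  let d : ℕ := dOf n (dec n f)
  p < n ∧
  (p + 1 < n → (p + 1) ∈ Pos) ∧
  (∀ j : ℕ, j + 1 = p → j ∈ Pos) ∧
  d = Multiset.countP (fun r => p + 2 ≤ r) Pos ∧
  (p = 0 → k = 0) ∧
  (∀ q ∈ P, pOf n q + 1 = p →
     k + Multiset.countP (fun r => r + 2 ≤ p) Pos = kOf n q + dOf n q) ∧
  (∀ q ∈ P, p + 2 ≤ pOf n q →
     kOf n q ≤ k + Multiset.countP (fun r => pOf n q < r) Pos)

/-- the verifier -/
def Ver (n : ℕ) (_id : ℕ) (f : Fin (sz n) → Bool)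
    (M : Multiset (Fin (sz n) → Bool)) : Bool :=
  if VerCond n f M then true else false

lemma ver_iff (n : ℕ) (i : ℕ) (f : Fin (sz n) → Bool) (M : Multiset (Fin (sz n) → Bool)) :
    Ver n i f M = true ↔ VerCond n f M := by
  rw [Ver]; split <;> simp [*]




variable {n : ℕ} (G : SimpleGraph (Fin n)) (e : Fin n ≃ Fin n)

def nbr (v : Fin n) : Finset (Fin n) := Finset.univ.filter (fun u => G.Adj v u)

def adjP (i j : Fin n) : Prop := G.Adj (e i) (e j)

lemma adjP_comm {i j : Fin n} : adjP G e i j ↔ adjP G e j i := by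
  unfold adjP; exact G.adj_comm _ _

/-- chords strictly enclosing abstract position `i` -/
def EnclS (i : ℕ) : Finset (Fin n × Fin n) :=
  Finset.univ.filter fun xy => adjP G e xy.1 xy.2 ∧ (xy.1 : ℕ) < i ∧ i < (xy.2 : ℕ)

def tk (i : ℕ) : ℕ := (EnclS G e i).card

def Sset (i : ℕ) : Finset (Fin n × Fin n) :=
  Finset.univ.filter fun xy => adjP G e xy.1 xy.2 ∧ (xy.1 : ℕ) = i ∧ i + 2 ≤ (xy.2 : ℕ)

def Aset (i : ℕ) : Finset (Fin n × Fin n) :=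
  Finset.univ.filter fun xy => adjP G e xy.1 xy.2 ∧ (xy.2 : ℕ) = i ∧ (xy.1 : ℕ) + 2 ≤ i

def QsetX (a b : ℕ) : Finset (Fin n × Fin n) :=
  Finset.univ.filter fun xy => adjP G e xy.1 xy.2 ∧ (xy.1 : ℕ) < a ∧ b < (xy.2 : ℕ)

def UsetX (a b : ℕ) : Finset (Fin n × Fin n) :=
  Finset.univ.filter fun xy => adjP G e xy.1 xy.2 ∧ (xy.1 : ℕ) = a ∧ b < (xy.2 : ℕ)

def RsetX (a b : ℕ) : Finset (Fin n × Fin n) :=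
  Finset.univ.filter fun xy => adjP G e xy.1 xy.2 ∧ a < (xy.1 : ℕ) ∧ (xy.1 : ℕ) < b ∧ b < (xy.2 : ℕ)

def LsetX (a b : ℕ) : Finset (Fin n × Fin n) :=
  Finset.univ.filter fun xy => adjP G e xy.1 xy.2 ∧ (xy.2 : ℕ) = b ∧ (xy.1 : ℕ) < a

def CsetX (a b : ℕ) : Finset (Fin n × Fin n) :=
  Finset.univ.filter fun xy => adjP G e xy.1 xy.2 ∧ (xy.1 : ℕ) < a ∧ a < (xy.2 : ℕ) ∧ (xy.2 : ℕ) < b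

/-- the basic recurrence for enclosure counts -/
lemma key_rec (i : ℕ) :
    tk G e (i + 1) + (Aset G e (i + 1)).card = tk G e i + (Sset G e i).card := by
  have hu1 : EnclS G e (i+1) ∪ Aset G e (i+1) = EnclS G e i ∪ Sset G e i := by
    ext xy
    simp only [EnclS, Aset, Sset, mem_union, mem_filter, mem_univ, true_and,
      ← and_or_left]
    exact and_congr_right (fun _ => by omega)
  have d1 : Disjoint (EnclS G e (i+1)) (Aset G e (i+1)) := by
    rw [Finset.disjoint_left]
    intro xy h1 h2
    simp only [EnclS, Aset, mem_filter, mem_univ, true_and] at h1 h2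
    omega
  have d2 : Disjoint (EnclS G e i) (Sset G e i) := by
    rw [Finset.disjoint_left]
    intro xy h1 h2
    simp only [EnclS, Sset, mem_filter, mem_univ, true_and] at h1 h2
    omega
  have := congrArg Finset.card hu1
  rwa [Finset.card_union_of_disjoint d1, Finset.card_union_of_disjoint d2] at this

lemma identR {a b : ℕ} (hab : a < b) :
    tk G e b = (QsetX G e a b).card + (UsetX G e a b).card + (RsetX G e a b).card := by
  have hu : EnclS G e b = (QsetX G e a b ∪ UsetX G e a b) ∪ RsetX G e a b := by
    ext xy
    simp only [EnclS, QsetX, UsetX, RsetX, mem_union, mem_filter, mem_univ, true_and,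
      ← and_or_left]
    exact and_congr_right (fun _ => by omega)
  have d1 : Disjoint (QsetX G e a b) (UsetX G e a b) := by
    rw [Finset.disjoint_left]; intro xy h1 h2
    simp only [QsetX, UsetX, mem_filter, mem_univ, true_and] at h1 h2; omega
  have d2 : Disjoint (QsetX G e a b ∪ UsetX G e a b) (RsetX G e a b) := by
    rw [Finset.disjoint_left]; intro xy h1 h2
    simp only [QsetX, UsetX, RsetX, mem_union, mem_filter, mem_univ, true_and] at h1 h2
    rcases h1 with h1 | h1 <;> omega
  rw [tk, hu, Finset.card_union_of_disjoint d2, Finset.card_union_of_disjoint d1]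

lemma identL {a b : ℕ} (hab : a < b) :
    tk G e a = (QsetX G e a b).card + (LsetX G e a b).card + (CsetX G e a b).card := by
  have hu : EnclS G e a = (QsetX G e a b ∪ LsetX G e a b) ∪ CsetX G e a b := by
    ext xy
    simp only [EnclS, QsetX, LsetX, CsetX, mem_union, mem_filter, mem_univ, true_and,
      ← and_or_left]
    exact and_congr_right (fun _ => by omega)
  have d1 : Disjoint (QsetX G e a b) (LsetX G e a b) := by
    rw [Finset.disjoint_left]; intro xy h1 h2
    simp only [QsetX, LsetX, mem_filter, mem_univ, true_and] at h1 h2; omega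
  have d2 : Disjoint (QsetX G e a b ∪ LsetX G e a b) (CsetX G e a b) := by
    rw [Finset.disjoint_left]; intro xy h1 h2
    simp only [QsetX, LsetX, CsetX, mem_union, mem_filter, mem_univ, true_and] at h1 h2
    rcases h1 with h1 | h1 <;> omega
  rw [tk, hu, Finset.card_union_of_disjoint d2, Finset.card_union_of_disjoint d1]

/-- pair-sets with fixed first coordinate -/
lemma card_pair_fst (a : Fin n) (c : ℕ → Prop) [DecidablePred c] :
    (Finset.univ.filter fun xy : Fin n × Fin n =>
        adjP G e xy.1 xy.2 ∧ (xy.1 : ℕ) = (a : ℕ) ∧ c (xy.2 : ℕ)).card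
      = (Finset.univ.filter fun y : Fin n => adjP G e a y ∧ c (y : ℕ)).card := by
  apply Finset.card_bij (fun xy _ => xy.2)
  · intro xy hxy
    simp only [mem_filter, mem_univ, true_and] at hxy ⊢
    obtain ⟨h1, h2, h3⟩ := hxy
    have : xy.1 = a := Fin.ext h2
    exact ⟨this ▸ h1, h3⟩
  · intro x hx y hy hxy
    simp only [mem_filter, mem_univ, true_and] at hx hy
    have hx1 : x.1 = a := Fin.ext hx.2.1
    have hy1 : y.1 = a := Fin.ext hy.2.1
    exact Prod.ext (hx1.trans hy1.symm) hxy
  · intro y hy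
    simp only [mem_filter, mem_univ, true_and] at hy
    exact ⟨(a, y), Finset.mem_filter.mpr ⟨Finset.mem_univ _, hy.1, rfl, hy.2⟩, rfl⟩

/-- pair-sets with fixed second coordinate -/
lemma card_pair_snd (b : Fin n) (c : ℕ → Prop) [DecidablePred c] :
    (Finset.univ.filter fun xy : Fin n × Fin n =>
        adjP G e xy.1 xy.2 ∧ (xy.2 : ℕ) = (b : ℕ) ∧ c (xy.1 : ℕ)).card
      = (Finset.univ.filter fun x : Fin n => adjP G e x b ∧ c (x : ℕ)).card := by
  apply Finset.card_bij (fun xy _ => xy.1)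
  · intro xy hxy
    simp only [mem_filter, mem_univ, true_and] at hxy ⊢
    obtain ⟨h1, h2, h3⟩ := hxy
    have : xy.2 = b := Fin.ext h2
    exact ⟨this ▸ h1, h3⟩
  · intro x hx y hy hxy
    simp only [mem_filter, mem_univ, true_and] at hx hy
    have hx1 : x.2 = b := Fin.ext hx.2.1
    have hy1 : y.2 = b := Fin.ext hy.2.1
    exact Prod.ext hxy (hx1.trans hy1.symm)
  · intro x hx
    simp only [mem_filter, mem_univ, true_and] at hx
    exact ⟨(x, b), Finset.mem_filter.mpr ⟨Finset.mem_univ _, hx.1, rfl, hx.2⟩, rfl⟩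

/-- counting in the neighbourhood vs counting positions -/
lemma card_nbr_pos (i : Fin n) (c : ℕ → Prop) [DecidablePred c] :
    ((nbr G (e i)).filter fun u => c ((e.symm u : Fin n) : ℕ)).card
      = (Finset.univ.filter fun y : Fin n => adjP G e i y ∧ c (y : ℕ)).card := by
  apply Finset.card_bij (fun u _ => e.symm u)
  · intro u hu
    simp only [nbr, mem_filter, mem_univ, true_and] at hu ⊢
    refine ⟨?_, hu.2⟩
    unfold adjP
    rw [Equiv.apply_symm_apply]
    exact hu.1
  · intro x hx y hy hxy
    exact e.symm.injective hxy
  · intro y hy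
    simp only [mem_filter, mem_univ, true_and] at hy
    refine ⟨e y, ?_, by simp⟩
    simp only [nbr, mem_filter, mem_univ, true_and, Equiv.symm_apply_apply]
    exact ⟨hy.1, hy.2⟩

lemma countP_nbr_pos (i : Fin n) (c : ℕ → Prop) [DecidablePred c] :
    Multiset.countP c ((nbr G (e i)).val.map (fun u => ((e.symm u : Fin n) : ℕ)))
      = (Finset.univ.filter fun y : Fin n => adjP G e i y ∧ c (y : ℕ)).card := by
  rw [Multiset.countP_map]
  have h0 : Multiset.card
        ((nbr G (e i)).val.filter (fun u => c ((e.symm u : Fin n) : ℕ)))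
      = ((nbr G (e i)).filter (fun u => c ((e.symm u : Fin n) : ℕ))).card := rfl
  rw [h0, card_nbr_pos]



-- ===================== completeness =====================

variable (hn : 1 ≤ n)

lemma card_filter_adj_comm (i : Fin n) (c : ℕ → Prop) [DecidablePred c] :
    (Finset.univ.filter fun y : Fin n => adjP G e i y ∧ c (y : ℕ)).card
      = (Finset.univ.filter fun y : Fin n => adjP G e y i ∧ c (y : ℕ)).card := by
  congr 1
  apply Finset.filter_congr
  intro y _
  rw [adjP_comm]

lemma tk_lt (i : ℕ) : tk G e i < (n + 2) ^ 2 := by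
  have h1 : tk G e i ≤ (Finset.univ : Finset (Fin n × Fin n)).card :=
    Finset.card_filter_le _ _
  have h2 : (Finset.univ : Finset (Fin n × Fin n)).card = n * n := by
    simp [Finset.card_univ]
  have h3 : n * n < (n + 2) ^ 2 := by nlinarith
  omega

def sdg (i : Fin n) : ℕ :=
  (Finset.univ.filter fun y : Fin n => adjP G e i y ∧ (i : ℕ) + 2 ≤ (y : ℕ)).card

lemma sdg_lt (i : Fin n) : sdg G e i < n + 2 := by
  have h1 : sdg G e i ≤ (Finset.univ : Finset (Fin n)).card :=
    Finset.card_filter_le _ _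
  simp only [Finset.card_univ, Fintype.card_fin] at h1
  omega

def tripl (i : Fin n) : Dat n :=
  (⟨(i : ℕ), by omega⟩, ⟨tk G e (i : ℕ), tk_lt G e _⟩, ⟨sdg G e i, sdg_lt G e i⟩)

def certC (v : Fin n) : Fin (sz n) → Bool := emb n (tripl G e (e.symm v))

lemma pOf_tripl (i : Fin n) : pOf n (tripl G e i) = (i : ℕ) := rfl
lemma kOf_tripl (i : Fin n) : kOf n (tripl G e i) = tk G e (i : ℕ) := rfl
lemma dOf_tripl (i : Fin n) : dOf n (tripl G e i) = sdg G e i := rfl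

lemma P_eq (v : Fin n) :
    ((nbr G v).val.map (certC G e)).map (dec n)
      = (nbr G v).val.map (fun u => tripl G e (e.symm u)) := by
  rw [Multiset.map_map]
  apply Multiset.map_congr rfl
  intro u _
  simp only [Function.comp_apply, certC, dec_emb]

lemma Pos_eq (v : Fin n) :
    (((nbr G v).val.map (certC G e)).map (dec n)).map (pOf n)
      = (nbr G v).val.map (fun u => ((e.symm u : Fin n) : ℕ)) := by
  rw [P_eq, Multiset.map_map]
  rfl

lemma mem_nbr {v u : Fin n} : u ∈ nbr G v ↔ G.Adj v u := by
  simp [nbr]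

theorem completeness (hW : IsPathOuterplanarWitness (G.comap e)) (v : Fin n) :
    VerCond n (certC G e v) ((nbr G v).val.map (certC G e)) := by
  have hdv : dec n (certC G e v) = tripl G e (e.symm v) := dec_emb n _
  have hev : e (e.symm v) = v := e.apply_symm_apply v
  set i : Fin n := e.symm v with hi
  have hadjW : ∀ j k : Fin n, adjP G e j k → j < k →
      ∀ x y : Fin n, adjP G e x y → x < y →
        (k ≤ x) ∨ (y ≤ j) ∨ (j ≤ x ∧ y ≤ k) ∨ (x ≤ j ∧ k ≤ y) := by
    intro j k hjk hlt x y hxy hlt'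
    exact hW.2 j k x y hjk hxy hlt hlt'
  refine ⟨?_, ?_, ?_, ?_, ?_, ?_, ?_⟩
  · -- position < n
    rw [hdv, pOf_tripl]; exact i.isLt
  · -- successor present
    intro hlt
    rw [hdv, pOf_tripl] at hlt ⊢
    rw [Pos_eq]
    rw [Multiset.mem_map]
    refine ⟨e ⟨(i : ℕ) + 1, hlt⟩, ?_, ?_⟩
    · rw [Finset.mem_val, mem_nbr]
      have := hW.1 i hlt
      rw [SimpleGraph.comap_adj] at this
      rwa [hev] at this
    · simp
  · -- predecessor present
    intro j hj
    rw [hdv, pOf_tripl] at hj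
    rw [Pos_eq, Multiset.mem_map]
    have hjn : j < n := by have := i.isLt; omega
    have hjn1 : j + 1 < n := by have := i.isLt; omega
    refine ⟨e ⟨j, hjn⟩, ?_, ?_⟩
    · rw [Finset.mem_val, mem_nbr]
      have := hW.1 ⟨j, hjn⟩ hjn1
      rw [SimpleGraph.comap_adj] at this
      have hieq : (⟨j + 1, hjn1⟩ : Fin n) = i := by
        apply Fin.ext; simpa using hj
      rw [hieq, hev] at this
      exact this.symm
    · simp
  · -- start-degree correct
    simp only [hdv, pOf_tripl, dOf_tripl]
    rw [Pos_eq, ← hev, countP_nbr_pos G e i (fun r => (i : ℕ) + 2 ≤ r)]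
    rfl
  · -- zero at position 0
    intro hp0
    rw [hdv, pOf_tripl] at hp0
    rw [hdv, kOf_tripl]
    have : EnclS G e (i : ℕ) = ∅ := by
      ext xy
      simp only [EnclS, Finset.mem_filter, Finset.mem_univ, true_and,
        Finset.notMem_empty, iff_false]
      rintro ⟨-, h2, -⟩
      omega
    rw [tk, this, Finset.card_empty]
  · -- the recurrence
    intro q hq hq1
    rw [P_eq, Multiset.mem_map] at hq
    obtain ⟨u, hu, rfl⟩ := hq
    rw [Finset.mem_val, mem_nbr] at hu
    set j : Fin n := e.symm u with hjdef
    simp only [hdv, pOf_tripl, kOf_tripl, dOf_tripl] at hq1 ⊢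
    rw [Pos_eq, ← hev, countP_nbr_pos G e i (fun r => r + 2 ≤ (i : ℕ)),
      card_filter_adj_comm G e i (fun r => r + 2 ≤ (i : ℕ))]
    have hA : (Finset.univ.filter fun y : Fin n =>
          adjP G e y i ∧ (y : ℕ) + 2 ≤ (i : ℕ)).card = (Aset G e (i : ℕ)).card := by
      rw [Aset]
      rw [card_pair_snd G e i (fun x => x + 2 ≤ (i : ℕ))]
    rw [hA]
    have hS : sdg G e j = (Sset G e (j : ℕ)).card := by
      rw [Sset, sdg]
      rw [card_pair_fst G e j (fun y => (j : ℕ) + 2 ≤ y)]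
    rw [hS]
    have hkr := key_rec G e (j : ℕ)
    rw [hq1] at hkr
    exact hkr
  · -- the crossing inequality
    intro q hq hq2
    rw [P_eq, Multiset.mem_map] at hq
    obtain ⟨u, hu, rfl⟩ := hq
    rw [Finset.mem_val, mem_nbr] at hu
    set j : Fin n := e.symm u with hjdef
    simp only [hdv, pOf_tripl, kOf_tripl] at hq2 ⊢
    rw [Pos_eq, ← hev]
    erw [countP_nbr_pos G e i (fun r => (j : ℕ) < r)]
    have hU : (Finset.univ.filter fun y : Fin n =>
          adjP G e i y ∧ (j : ℕ) < (y : ℕ)).card = (UsetX G e (i : ℕ) (j : ℕ)).card := by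
      rw [UsetX]
      rw [card_pair_fst G e i (fun y => (j : ℕ) < y)]
    rw [hU]
    have hab : (i : ℕ) < (j : ℕ) := by omega
    have hadj : adjP G e i j := by
      unfold adjP
      rw [hev, hjdef, e.apply_symm_apply]
      exact hu
    have hR : RsetX G e (i : ℕ) (j : ℕ) = ∅ := by
      ext xy
      simp only [RsetX, Finset.mem_filter, Finset.mem_univ, true_and,
        Finset.notMem_empty, iff_false]
      rintro ⟨haxy, h1, h2, h3⟩
      have h4 := hadjW i j hadj (by rw [Fin.lt_def]; omega) xy.1 xy.2 haxy
        (by rw [Fin.lt_def]; omega)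
      rcases h4 with h | h | ⟨h, h'⟩ | ⟨h, h'⟩ <;>
        simp only [Fin.le_def] at h <;> omega
    have e1 := identR G e hab
    have e2 := identL G e hab
    rw [hR, Finset.card_empty] at e1
    omega



-- ===================== soundness =====================

lemma tk_zero : tk G e 0 = 0 := by
  have h0 : EnclS G e 0 = ∅ := by
    ext xy
    simp only [EnclS, Finset.mem_filter, Finset.mem_univ, true_and,
      Finset.notMem_empty, iff_false]
    rintro ⟨-, h2, -⟩
    omega
  rw [tk, h0, Finset.card_empty]

theorem soundness (hn : 1 ≤ n) (cert : Fin n → (Fin (sz n) → Bool))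
    (h : ∀ v : Fin n, VerCond n (cert v) ((nbr G v).val.map cert)) :
    IsPathOuterplanar G := by
  classical
  have h1 : ∀ v, pOf n (dec n (cert v)) < n := fun v => (h v).1
  -- membership in the position multiset
  have hmem : ∀ v : Fin n, ∀ j : ℕ,
      j ∈ ((((nbr G v).val.map cert).map (dec n)).map (pOf n)) ↔
        ∃ u : Fin n, G.Adj v u ∧ pOf n (dec n (cert u)) = j := by
    intro v j
    rw [Multiset.map_map, Multiset.map_map, Multiset.mem_map]
    constructor
    · rintro ⟨u, hu, rfl⟩
      rw [Finset.mem_val, mem_nbr] at hu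
      exact ⟨u, hu, rfl⟩
    · rintro ⟨u, hu, rfl⟩
      exact ⟨u, by rw [Finset.mem_val, mem_nbr]; exact hu, rfl⟩
  -- surjectivity of the position map
  have hstep : ∀ v : Fin n, pOf n (dec n (cert v)) + 1 < n →
      ∃ u, G.Adj v u ∧ pOf n (dec n (cert u)) = pOf n (dec n (cert v)) + 1 := by
    intro v hv
    exact (hmem v _).mp ((h v).2.1 hv)
  have hpred : ∀ v : Fin n, ∀ j : ℕ, j + 1 = pOf n (dec n (cert v)) →
      ∃ u, G.Adj v u ∧ pOf n (dec n (cert u)) = j := by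
    intro v j hj
    exact (hmem v _).mp ((h v).2.2.1 j hj)
  have hNE : Nonempty (Fin n) := ⟨⟨0, hn⟩⟩
  have hzero : ∃ v, pOf n (dec n (cert v)) = 0 := by
    have hne : (Finset.image (fun v => pOf n (dec n (cert v))) Finset.univ).Nonempty :=
      Finset.Nonempty.image Finset.univ_nonempty _
    have hmmem := Finset.min'_mem _ hne
    rw [Finset.mem_image] at hmmem
    obtain ⟨v0, -, hv0⟩ := hmmem
    by_cases hm0 : (Finset.image (fun v => pOf n (dec n (cert v))) Finset.univ).min' hne = 0
    · exact ⟨v0, by omega⟩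
    · obtain ⟨u, -, hu⟩ := hpred v0 ((Finset.image (fun v => pOf n (dec n (cert v))) Finset.univ).min' hne - 1) (by omega)
      have hle : (Finset.image (fun v => pOf n (dec n (cert v))) Finset.univ).min' hne
          ≤ pOf n (dec n (cert u)) := by
        apply Finset.min'_le
        rw [Finset.mem_image]
        exact ⟨u, Finset.mem_univ _, rfl⟩
      omega
  have hsurjall : ∀ j : ℕ, j < n → ∃ v, pOf n (dec n (cert v)) = j := by
    intro j
    induction j with
    | zero => exact fun _ => hzero
    | succ j ih =>
      intro hj
      obtain ⟨v, hv⟩ := ih (by omega)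
      obtain ⟨u, -, hu⟩ := hstep v (by omega)
      exact ⟨u, by omega⟩
  have hsurj : Function.Surjective (fun v : Fin n => (⟨pOf n (dec n (cert v)), h1 v⟩ : Fin n)) := by
    intro y
    obtain ⟨v, hv⟩ := hsurjall (y : ℕ) y.isLt
    exact ⟨v, Fin.ext hv⟩
  have hinj : Function.Injective (fun v : Fin n => (⟨pOf n (dec n (cert v)), h1 v⟩ : Fin n)) :=
    Finite.injective_iff_surjective.mpr hsurj
  refine ⟨(Equiv.ofBijective _ ⟨hinj, hsurj⟩).symm, ?_⟩
  set e : Fin n ≃ Fin n := (Equiv.ofBijective _ ⟨hinj, hsurj⟩).symm with he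
  have hev2 : ∀ i : Fin n, pOf n (dec n (cert (e i))) = (i : ℕ) := by
    intro i
    have h2 : (fun v : Fin n => (⟨pOf n (dec n (cert v)), h1 v⟩ : Fin n)) (e i) = i :=
      (Equiv.ofBijective _ ⟨hinj, hsurj⟩).apply_symm_apply i
    exact congrArg Fin.val h2
  have hev3 : ∀ (j : ℕ) (hj : j < n), pOf n (dec n (cert (e ⟨j, hj⟩))) = j := by
    intro j hj; exact hev2 ⟨j, hj⟩
  have hposinj : ∀ u w : Fin n, pOf n (dec n (cert u)) = pOf n (dec n (cert w)) → u = w := by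
    intro u w huw
    exact hinj (Fin.ext huw)
  have hsymmval : ∀ w : Fin n, ((e.symm w : Fin n) : ℕ) = pOf n (dec n (cert w)) := by
    intro w; rfl
  -- rewriting of the multisets
  have hPosM : ∀ w : Fin n,
      ((((nbr G w).val.map cert).map (dec n)).map (pOf n))
        = (nbr G w).val.map (fun u => ((e.symm u : Fin n) : ℕ)) := by
    intro w
    rw [Multiset.map_map, Multiset.map_map]
    exact Multiset.map_congr rfl (fun u _ => rfl)
  have hPM : ∀ w : Fin n,
      (((nbr G w).val.map cert).map (dec n))
        = (nbr G w).val.map (fun u => dec n (cert u)) := by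
    intro w
    rw [Multiset.map_map]
    rfl
  -- path edges
  have hpath : ∀ (i : ℕ) (hi1 : i < n) (hi : i + 1 < n),
      G.Adj (e ⟨i, hi1⟩) (e ⟨i + 1, hi⟩) := by
    intro i hi1 hi
    obtain ⟨u, hadj, hu⟩ := hstep (e ⟨i, hi1⟩) (by rw [hev3]; exact hi)
    have hue : u = e ⟨i + 1, hi⟩ := by
      apply hposinj
      rw [hu, hev3, hev3]
    rwa [hue] at hadj
  -- genuineness of enclosure counts
  have hK : ∀ i : ℕ, ∀ hi : i < n, kOf n (dec n (cert (e ⟨i, hi⟩))) = tk G e i := by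
    intro i
    induction i with
    | zero =>
      intro hi
      rw [tk_zero]
      exact (h (e ⟨0, hi⟩)).2.2.2.2.1 (hev3 0 hi)
    | succ i ih =>
      intro hi
      have hi' : i < n := by omega
      have hadj : G.Adj (e ⟨i, hi'⟩) (e ⟨i + 1, hi⟩) := hpath i hi' hi
      have c6 := (h (e ⟨i + 1, hi⟩)).2.2.2.2.2.1
      have hqmem : dec n (cert (e ⟨i, hi'⟩)) ∈
          (((nbr G (e ⟨i + 1, hi⟩)).val.map cert).map (dec n)) := by
        rw [hPM, Multiset.mem_map]
        exact ⟨e ⟨i, hi'⟩, by rw [Finset.mem_val, mem_nbr]; exact hadj.symm, rfl⟩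
      have hq1 : pOf n (dec n (cert (e ⟨i, hi'⟩))) + 1
          = pOf n (dec n (cert (e ⟨i + 1, hi⟩))) := by
        rw [hev3, hev3]
      have heq := c6 _ hqmem hq1
      have c4 := (h (e ⟨i, hi'⟩)).2.2.2.1
      rw [hPosM, hev3] at heq
      rw [hPosM, hev3] at c4
      rw [countP_nbr_pos G e ⟨i + 1, hi⟩ (fun r => r + 2 ≤ i + 1)] at heq
      rw [countP_nbr_pos G e ⟨i, hi'⟩ (fun r => i + 2 ≤ r)] at c4
      rw [card_filter_adj_comm G e ⟨i + 1, hi⟩ (fun r => r + 2 ≤ i + 1)] at heq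
      have hA : (Finset.univ.filter fun y : Fin n =>
            adjP G e y ⟨i + 1, hi⟩ ∧ (y : ℕ) + 2 ≤ i + 1).card
          = (Aset G e (i + 1)).card := by
        rw [Aset]
        have hc := card_pair_snd G e (⟨i + 1, hi⟩ : Fin n) (fun x => x + 2 ≤ i + 1)
        have hval : ((⟨i + 1, hi⟩ : Fin n) : ℕ) = i + 1 := rfl
        rw [hval] at hc
        rw [hc]
      have hS : dOf n (dec n (cert (e ⟨i, hi'⟩))) = (Sset G e i).card := by
        rw [c4, Sset]
        have hc := card_pair_fst G e (⟨i, hi'⟩ : Fin n) (fun y => i + 2 ≤ y)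
        have hval : ((⟨i, hi'⟩ : Fin n) : ℕ) = i := rfl
        rw [hval] at hc
        rw [hc]
      rw [hA, hS, ih hi'] at heq
      have hkr := key_rec G e i
      omega
  -- no crossing chords
  have hNC : ∀ a b x y : Fin n, adjP G e a b → adjP G e x y →
      ¬((a : ℕ) < (x : ℕ) ∧ (x : ℕ) < (b : ℕ) ∧ (b : ℕ) < (y : ℕ)) := by
    by_contra hcon
    push_neg at hcon
    obtain ⟨a0, b0, x0, y0, hab0, hxy0, hpat0⟩ := hcon
    set CRP : Fin n → Prop := fun a => ∃ b x y : Fin n, adjP G e a b ∧ adjP G e x y ∧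
      (((a : ℕ) < (x : ℕ) ∧ (x : ℕ) < (b : ℕ) ∧ (b : ℕ) < (y : ℕ)) ∨
       ((x : ℕ) < (a : ℕ) ∧ (a : ℕ) < (y : ℕ) ∧ (y : ℕ) < (b : ℕ))) with hCRP
    have hCRne : (Finset.univ.filter CRP).Nonempty :=
      ⟨a0, by rw [Finset.mem_filter]; exact ⟨Finset.mem_univ _, b0, x0, y0, hab0, hxy0, Or.inl hpat0⟩⟩
    set amin : Fin n := (Finset.univ.filter CRP).min' hCRne with hamin
    have hminle : ∀ w : Fin n, CRP w → amin ≤ w := by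
      intro w hw
      apply Finset.min'_le
      rw [Finset.mem_filter]
      exact ⟨Finset.mem_univ _, hw⟩
    have hamem : CRP amin := by
      have := Finset.min'_mem _ hCRne
      rw [Finset.mem_filter] at this
      exact this.2
    obtain ⟨b, x, y, hab, hxy, hpat⟩ := hamem
    rcases hpat with hpat | hpat
    · -- right-crossing : use the verified inequality at the chord (amin, b)
      have habn : (amin : ℕ) < (b : ℕ) := by omega
      -- the verified inequality
      have c7 := (h (e amin)).2.2.2.2.2.2
      have hqmem : dec n (cert (e b)) ∈
          (((nbr G (e amin)).val.map cert).map (dec n)) := by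
        rw [hPM, Multiset.mem_map]
        refine ⟨e b, ?_, rfl⟩
        rw [Finset.mem_val, mem_nbr]
        exact hab
      have hq2 : pOf n (dec n (cert (e amin))) + 2 ≤ pOf n (dec n (cert (e b))) := by
        rw [hev2, hev2]
        omega
      have hineq := c7 _ hqmem hq2
      rw [hPosM, hev2] at hineq
      rw [countP_nbr_pos G e amin (fun r => (b : ℕ) < r)] at hineq
      have hU : (Finset.univ.filter fun y0 : Fin n =>
            adjP G e amin y0 ∧ (b : ℕ) < (y0 : ℕ)).card
          = (UsetX G e (amin : ℕ) (b : ℕ)).card := by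
        rw [UsetX]
        rw [card_pair_fst G e amin (fun r => (b : ℕ) < r)]
      have hKa : kOf n (dec n (cert (e amin))) = tk G e (amin : ℕ) := by
        have := hK (amin : ℕ) amin.isLt
        rwa [Fin.eta] at this
      have hKb : kOf n (dec n (cert (e b))) = tk G e (b : ℕ) := by
        have := hK (b : ℕ) b.isLt
        rwa [Fin.eta] at this
      rw [hU, hKa, hKb] at hineq
      -- identities
      have e1 := identR G e habn
      have e2 := identL G e habn
      -- the right-crossing set is nonempty
      have hR : 0 < (RsetX G e (amin : ℕ) (b : ℕ)).card := by
        rw [Finset.card_pos]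
        refine ⟨(x, y), ?_⟩
        simp only [RsetX, Finset.mem_filter, Finset.mem_univ, true_and]
        exact ⟨hxy, by omega, by omega, by omega⟩
      -- the left sets are empty by minimality
      have hL : (LsetX G e (amin : ℕ) (b : ℕ)).card = 0 := by
        rw [Finset.card_eq_zero]
        ext xy
        simp only [LsetX, Finset.mem_filter, Finset.mem_univ, true_and,
          Finset.notMem_empty, iff_false]
        rintro ⟨haxy, h2, h3⟩
        have hcr : CRP xy.1 := ⟨xy.2, x, y, haxy, hxy, Or.inl (by omega)⟩
        have := hminle _ hcr
        rw [Fin.le_def] at this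
        omega
      have hC : (CsetX G e (amin : ℕ) (b : ℕ)).card = 0 := by
        rw [Finset.card_eq_zero]
        ext xy
        simp only [CsetX, Finset.mem_filter, Finset.mem_univ, true_and,
          Finset.notMem_empty, iff_false]
        rintro ⟨haxy, h2, h3, h4⟩
        have hcr : CRP xy.1 := ⟨xy.2, amin, b, haxy, hab, Or.inl (by omega)⟩
        have := hminle _ hcr
        rw [Fin.le_def] at this
        omega
      omega
    · -- left-crossing : contradicts minimality directly
      have hcr : CRP x := ⟨y, amin, b, hxy, hab, Or.inl (by omega)⟩
      have := hminle _ hcr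
      rw [Fin.le_def] at this
      omega
  -- assemble the witness
  constructor
  · -- path edges
    intro i hi
    rw [SimpleGraph.comap_adj]
    have := hpath (i : ℕ) i.isLt hi
    rwa [Fin.eta] at this
  · -- non-crossing
    intro a b x y hab hxy hlt hlt'
    rw [SimpleGraph.comap_adj] at hab hxy
    rw [Fin.lt_def] at hlt hlt'
    by_contra hcon
    push_neg at hcon
    obtain ⟨hc1, hc2, hc3, hc4⟩ := hcon
    rw [Fin.lt_def] at hc1 hc2
    simp only [Fin.le_def, not_and, not_le] at hc3 hc4
    rcases Nat.lt_trichotomy (a : ℕ) (x : ℕ) with htri | htri | htri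
    · exact hNC a b x y hab hxy ⟨htri, by omega, by have := hc3 (by omega); omega⟩
    · have hbd := hc3 (by omega)
      have hdb := hc4 (by omega)
      omega
    · exact hNC x y a b hxy hab ⟨htri, by omega, by have := hc4 (by omega); omega⟩


-- MORE
end
end PLSProof

/-- There is a proof-labeling scheme with `O(log n)`-bit certificates for the class of
path-outerplanar graphs. -/
theorem pls_for_path_outerplanarity (c : ℕ) (hc : 2 ≤ c) :
    ∃ C : ℕ, 0 < C ∧
      ∃ (s : ℕ → ℕ)
        (A : (n : ℕ) → ℕ → (Fin (s n) → Bool) → Multiset (Fin (s n) → Bool) → Bool),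
        (∀ n : ℕ, s n ≤ C * Nat.clog 2 (n + 2)) ∧
        IsPLS c s A (fun _n G => IsPathOuterplanar G) := by
  refine ⟨4, by norm_num, PLSProof.sz, PLSProof.Ver, fun n => le_refl _, ?_⟩
  intro n hn G _hconn ids _hids
  constructor
  · rintro ⟨e, hW⟩
    refine ⟨PLSProof.certC G e, fun v => ?_⟩
    rw [PLSProof.ver_iff]
    exact PLSProof.completeness G e hW v
  · rintro ⟨cert, hcert⟩
    apply PLSProof.soundness G hn cert
    intro v
    have hv := hcert v
    rw [PLSProof.ver_iff] at hv
    exact hv
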